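/- Let s ∈ {1,...,n-1}, Ω ⊆ ℝ^n a nonnegative symmetric closed convex set, and a ∈ ℝ^n. Suppose y and z are both projections of a onto C_s ∩ Ω, and suppose ‖y‖₀ < s, supp(z) ⊆ supp(y). Then y = z. -/

import Mathlib

open scoped RealInnerProductSpace

noncomputable section

/-- Euclidean space ℝ^n. -/
abbrev E (n : ℕ) := EuclideanSpace ℝ (Fin n)

/-- Support of a vector, as a finset. -/
def spt {n : ℕ} (x : E n) : Finset (Fin n) := Finset.univ.filter (fun i => x i ≠ 0)

/-- A set is symmetric if it is invariant under coordinate permutations. -/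
def IsSymmSet {n : ℕ} (X : Set (E n)) : Prop :=
  ∀ x ∈ X, ∀ σ : Equiv.Perm (Fin n), (WithLp.toLp 2 (fun i => x (σ i)) : E n) ∈ X

/-- A set is sign-free symmetric if it is symmetric and invariant under sign flips. -/
def IsSignFreeSymmSet {n : ℕ} (X : Set (E n)) : Prop :=
  IsSymmSet X ∧ ∀ x ∈ X, ∀ ε : Fin n → ℝ, (∀ i, ε i = 1 ∨ ε i = -1) →
    (WithLp.toLp 2 (fun i => ε i * x i) : E n) ∈ X

/-- A set is nonnegative symmetric if it is symmetric and contained in ℝ^n_+. -/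
def IsNonnegSymmSet {n : ℕ} (X : Set (E n)) : Prop :=
  IsSymmSet X ∧ ∀ x ∈ X, ∀ i, 0 ≤ x i

/-- `y` is a (Euclidean) projection of `x` onto `X`. -/
def IsProj {n : ℕ} (X : Set (E n)) (x y : E n) : Prop :=
  y ∈ X ∧ ∀ z ∈ X, ‖y - x‖ ≤ ‖z - x‖

/-- The set of s-sparse vectors. -/
def Cs (n s : ℕ) : Set (E n) := {x | (spt x).card ≤ s}

theorem stmt19 {n s : ℕ} (Ω : Set (E n)) (hcl : IsClosed Ω) (hnn : IsNonnegSymmSet Ω)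
    (hconv : Convex ℝ Ω) (hs1 : 1 ≤ s) (hs2 : s < n)
    (a y z : E n)
    (hy : IsProj (Cs n s ∩ Ω) a y) (hz : IsProj (Cs n s ∩ Ω) a z)
    (hcard : (spt y).card < s) (hsub : spt z ⊆ spt y) :
    y = z := by
  by_contra hne
  set m : E n := (1/2 : ℝ) • y + (1/2 : ℝ) • z with hm
  have hmΩ : m ∈ Ω := hconv hy.1.2 hz.1.2 (by norm_num) (by norm_num) (by norm_num)
  have hmCs : m ∈ Cs n s := by
    have hsub2 : spt m ⊆ spt y := by
      intro i hi
      simp only [spt, Finset.mem_filter, Finset.mem_univ, true_and] at hi ⊢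
      intro hyi
      have hzi : z i = 0 := by
        by_contra hzi
        have : i ∈ spt z := by
          simp [spt, hzi]
        exact (by simpa [spt] using hsub this : y i ≠ 0) hyi
      apply hi
      simp [hm, hyi, hzi, PiLp.add_apply, PiLp.smul_apply]
    exact le_trans (Finset.card_le_card hsub2) hy.1.1
  have heq : ‖y - a‖ = ‖z - a‖ :=
    le_antisymm (hy.2 z hz.1) (hz.2 y hy.1)
  have hlt : ‖m - a‖ < ‖y - a‖ := by
    have hma : m - a = (1/2 : ℝ) • ((y - a) + (z - a)) := by
      rw [hm]; module
    have hyz : (0:ℝ) < ‖y - z‖ := by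
      rw [norm_pos_iff]
      exact sub_ne_zero_of_ne hne
    have hpar : ‖(y - a) + (z - a)‖ ^ 2 = 4 * ‖y - a‖ ^ 2 - ‖y - z‖ ^ 2 := by
      have h1 := @norm_add_sq_real (E n) _ _ (y - a) (z - a)
      have h2 := @norm_sub_sq_real (E n) _ _ (y - a) (z - a)
      have h3 : (y - a) - (z - a) = y - z := by abel
      rw [h3] at h2
      have h4 : ‖z - a‖ = ‖y - a‖ := heq.symm
      rw [h4] at h1 h2
      linarith
    have hy0 : (0:ℝ) < ‖y - a‖ := by
      rcases eq_or_lt_of_le (norm_nonneg (y - a)) with h | h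
      · exfalso
        have : ‖(y-a) + (z-a)‖^2 < 0 := by
          rw [hpar, ← h]; nlinarith
        nlinarith [norm_nonneg ((y-a)+(z-a))]
      · exact h
    have hlt2 : ‖(y - a) + (z - a)‖ ^ 2 < (2 * ‖y - a‖) ^ 2 := by
      rw [hpar]; nlinarith
    have hlt3 : ‖(y - a) + (z - a)‖ < 2 * ‖y - a‖ := by
      nlinarith [norm_nonneg ((y-a)+(z-a))]
    rw [hma, norm_smul]
    have h12 : ‖(1/2 : ℝ)‖ = 1/2 := by
      rw [Real.norm_eq_abs]; norm_num
    rw [h12]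
    linarith
  exact absurd (hy.2 m ⟨hmCs, hmΩ⟩) (not_le.mpr hlt)
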